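/- Let u, b : ℝ² → ℝ² and π : ℝ² → ℝ be smooth functions satisfying the momentum equation -Δu + (u·∇)u + ∇π = (b·∇)b pointwise on ℝ², and suppose curl b = u·b⊥ everywhere, where u·b⊥ = u₁b₂ - u₂b₁. Then, with Q := |u|²/2 + π - |b|²/2, the pointwise identity |∇u|² + (curl b)² = Δ(|u|²/2) - u·∇Q holds on ℝ². -/

import Mathlib

open MeasureTheory Metric

noncomputable section

abbrev E2 : Type := EuclideanSpace ℝ (Fin 2)

/-- Partial derivative `∂ᵢ f` of a scalar function on `ℝ²`. -/
def pd (f : E2 → ℝ) (i : Fin 2) (x : E2) : ℝ :=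
  fderiv ℝ f x (EuclideanSpace.single i 1)

/-- Partial derivative `∂ᵢ uⱼ` of a vector field on `ℝ²`. -/
def pdv (u : E2 → E2) (i j : Fin 2) (x : E2) : ℝ :=
  pd (fun y => u y j) i x

/-- Laplacian of a scalar function on `ℝ²`. -/
def lap (f : E2 → ℝ) (x : E2) : ℝ :=
  pd (pd f 0) 0 x + pd (pd f 1) 1 x

/-- `|∇f|²` for a scalar function. -/
def gradSq (f : E2 → ℝ) (x : E2) : ℝ := (pd f 0 x)^2 + (pd f 1 x)^2

/-- `|∇u|²` for a vector field: sum of squares of all first-order partials. -/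
def gradSqV (u : E2 → E2) (x : E2) : ℝ := ∑ i, ∑ j, (pdv u i j x)^2

/-- Drift term `u·∇f`. -/
def advect (u : E2 → E2) (f : E2 → ℝ) (x : E2) : ℝ :=
  u x 0 * pd f 0 x + u x 1 * pd f 1 x

end

section Helpers

lemma contDiff_comp_proj (u : E2 → E2) (hu : ContDiff ℝ (⊤ : ℕ∞) u) (j : Fin 2) :
    ContDiff ℝ (⊤ : ℕ∞) (fun y => u y j) :=
  (EuclideanSpace.proj j : E2 →L[ℝ] ℝ).contDiff.comp hu

lemma contDiff_pd {f : E2 → ℝ} (hf : ContDiff ℝ (⊤ : ℕ∞) f) (i : Fin 2) :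
    ContDiff ℝ (⊤ : ℕ∞) (pd f i) := by
  have h : ContDiff ℝ ((⊤ : ℕ∞) : WithTop ℕ∞) (fderiv ℝ f) :=
    hf.fderiv_right (m := ((⊤ : ℕ∞) : WithTop ℕ∞)) (by norm_cast)
  exact h.clm_apply contDiff_const

lemma pd_add' {f g : E2 → ℝ} (hf : Differentiable ℝ f) (hg : Differentiable ℝ g)
    (i : Fin 2) (x : E2) :
    pd (fun y => f y + g y) i x = pd f i x + pd g i x := by
  simp [pd, fderiv_fun_add (hf x) (hg x)]

lemma pd_sub' {f g : E2 → ℝ} (hf : Differentiable ℝ f) (hg : Differentiable ℝ g)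
    (i : Fin 2) (x : E2) :
    pd (fun y => f y - g y) i x = pd f i x - pd g i x := by
  simp [pd, fderiv_fun_sub (hf x) (hg x)]

lemma pd_mul' {f g : E2 → ℝ} (hf : Differentiable ℝ f) (hg : Differentiable ℝ g)
    (i : Fin 2) (x : E2) :
    pd (fun y => f y * g y) i x = f x * pd g i x + g x * pd f i x := by
  simp [pd, fderiv_fun_mul (hf x) (hg x)]

lemma pd_div_const' {f : E2 → ℝ} (hf : Differentiable ℝ f) (c : ℝ) (i : Fin 2) (x : E2) :
    pd (fun y => f y / c) i x = pd f i x / c := by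
  simp [pd, div_eq_mul_inv, fderiv_mul_const (hf x)]; ring

/-- First derivative of half the squared norm. -/
lemma pd_halfsq (v : E2 → E2) (hv : ContDiff ℝ (⊤ : ℕ∞) v) (i : Fin 2) (x : E2) :
    pd (fun y => ((v y 0) ^ 2 + (v y 1) ^ 2) / 2) i x
      = v x 0 * pdv v i 0 x + v x 1 * pdv v i 1 x := by
  have h0 : Differentiable ℝ (fun y => v y 0) :=
    (contDiff_comp_proj v hv 0).differentiable (by simp)
  have h1 : Differentiable ℝ (fun y => v y 1) :=
    (contDiff_comp_proj v hv 1).differentiable (by simp)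
  have e : (fun y => ((v y 0) ^ 2 + (v y 1) ^ 2) / 2)
      = fun y => ((v y 0) * (v y 0) + (v y 1) * (v y 1)) / 2 := by
    funext y; ring
  rw [e, pd_div_const' (f := fun y => v y 0 * v y 0 + v y 1 * v y 1) ((h0.mul h0).add (h1.mul h1)),
    pd_add' (f := fun y => v y 0 * v y 0) (g := fun y => v y 1 * v y 1) (h0.mul h0) (h1.mul h1), pd_mul' h0 h0, pd_mul' h1 h1]
  simp only [pdv]; ring

end Helpers

/-- If `-Δu + (u·∇)u + ∇π = (b·∇)b` and `curl b = u·b⊥` hold pointwise on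
`ℝ²`, then with `Q := |u|²/2 + π − |b|²/2` one has the pointwise identity
`|∇u|² + (curl b)² = Δ(|u|²/2) − u·∇Q`. -/
theorem energy_identity (u b : E2 → E2) (π : E2 → ℝ)
    (hu : ContDiff ℝ (⊤ : ℕ∞) u) (hb : ContDiff ℝ (⊤ : ℕ∞) b)
    (hπ : ContDiff ℝ (⊤ : ℕ∞) π)
    (hmom : ∀ x : E2, ∀ j : Fin 2,
      -(lap (fun y => u y j) x) + advect u (fun y => u y j) x + pd π j x
        = advect b (fun y => b y j) x)
    (hcurl : ∀ x : E2, pdv b 0 1 x - pdv b 1 0 x = u x 0 * b x 1 - u x 1 * b x 0) :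
    ∀ x : E2,
      gradSqV u x + (pdv b 0 1 x - pdv b 1 0 x) ^ 2 =
        lap (fun y => ((u y 0) ^ 2 + (u y 1) ^ 2) / 2) x -
          advect u
            (fun y => ((u y 0) ^ 2 + (u y 1) ^ 2) / 2 + π y
              - ((b y 0) ^ 2 + (b y 1) ^ 2) / 2) x := by
  intro x
  have hu0 := contDiff_comp_proj u hu 0
  have hu1 := contDiff_comp_proj u hu 1
  have du0 : Differentiable ℝ (fun y => u y 0) := hu0.differentiable (by simp)
  have du1 : Differentiable ℝ (fun y => u y 1) := hu1.differentiable (by simp)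
  have db0 : Differentiable ℝ (fun y => b y 0) :=
    (contDiff_comp_proj b hb 0).differentiable (by simp)
  have db1 : Differentiable ℝ (fun y => b y 1) :=
    (contDiff_comp_proj b hb 1).differentiable (by simp)
  have dπ : Differentiable ℝ π := hπ.differentiable (by simp)
  have dpu0 : ∀ i : Fin 2, Differentiable ℝ (pd (fun y => u y 0) i) := fun i =>
    (contDiff_pd hu0 i).differentiable (by simp)
  have dpu1 : ∀ i : Fin 2, Differentiable ℝ (pd (fun y => u y 1) i) := fun i =>
    (contDiff_pd hu1 i).differentiable (by simp)
  have dF : Differentiable ℝ (fun y => ((u y 0) ^ 2 + (u y 1) ^ 2) / 2) :=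
    by simpa [div_eq_mul_inv] using ((du0.pow 2).add (du1.pow 2)).mul_const (2:ℝ)⁻¹
  have dB : Differentiable ℝ (fun y => ((b y 0) ^ 2 + (b y 1) ^ 2) / 2) :=
    by simpa [div_eq_mul_inv] using ((db0.pow 2).add (db1.pow 2)).mul_const (2:ℝ)⁻¹
  -- second derivatives of |u|²/2
  have key : ∀ i : Fin 2,
      pd (pd (fun y => ((u y 0) ^ 2 + (u y 1) ^ 2) / 2) i) i x
        = u x 0 * pd (pd (fun y => u y 0) i) i x + (pd (fun y => u y 0) i x) ^ 2
          + u x 1 * pd (pd (fun y => u y 1) i) i x + (pd (fun y => u y 1) i x) ^ 2 := by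
    intro i
    have hF : pd (fun y => ((u y 0) ^ 2 + (u y 1) ^ 2) / 2) i
        = fun z => u z 0 * pd (fun y => u y 0) i z + u z 1 * pd (fun y => u y 1) i z := by
      funext z; exact pd_halfsq u hu i z
    have e3 : pd (fun z => u z 0 * pd (fun y => u y 0) i z
          + u z 1 * pd (fun y => u y 1) i z) i x
        = pd (fun z => u z 0 * pd (fun y => u y 0) i z) i x
          + pd (fun z => u z 1 * pd (fun y => u y 1) i z) i x :=
      pd_add' (du0.mul (dpu0 i)) (du1.mul (dpu1 i)) i x
    have e4 : pd (fun z => u z 0 * pd (fun y => u y 0) i z) i x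
        = u x 0 * pd (pd (fun y => u y 0) i) i x
          + pd (fun y => u y 0) i x * pd (fun y => u y 0) i x :=
      pd_mul' du0 (dpu0 i) i x
    have e5 : pd (fun z => u z 1 * pd (fun y => u y 1) i z) i x
        = u x 1 * pd (pd (fun y => u y 1) i) i x
          + pd (fun y => u y 1) i x * pd (fun y => u y 1) i x :=
      pd_mul' du1 (dpu1 i) i x
    rw [hF, e3, e4, e5]; ring
  -- first derivative of Q
  have hG : ∀ i : Fin 2,
      pd (fun y => ((u y 0) ^ 2 + (u y 1) ^ 2) / 2 + π y
          - ((b y 0) ^ 2 + (b y 1) ^ 2) / 2) i x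
        = (u x 0 * pd (fun y => u y 0) i x + u x 1 * pd (fun y => u y 1) i x)
          + pd π i x
          - (b x 0 * pd (fun y => b y 0) i x + b x 1 * pd (fun y => b y 1) i x) := by
    intro i
    have e1 : pd (fun y => ((u y 0) ^ 2 + (u y 1) ^ 2) / 2 + π y
          - ((b y 0) ^ 2 + (b y 1) ^ 2) / 2) i x
        = pd (fun y => ((u y 0) ^ 2 + (u y 1) ^ 2) / 2 + π y) i x
          - pd (fun y => ((b y 0) ^ 2 + (b y 1) ^ 2) / 2) i x :=
      pd_sub' (dF.add dπ) dB i x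
    have e2 : pd (fun y => ((u y 0) ^ 2 + (u y 1) ^ 2) / 2 + π y) i x
        = pd (fun y => ((u y 0) ^ 2 + (u y 1) ^ 2) / 2) i x + pd π i x :=
      pd_add' dF dπ i x
    rw [e1, e2, pd_halfsq u hu i x, pd_halfsq b hb i x]
    simp only [pdv]
  have hm0 := hmom x 0
  have hm1 := hmom x 1
  have hc := hcurl x
  simp only [lap, advect, gradSqV, pdv, Fin.sum_univ_two] at hm0 hm1 hc ⊢
  rw [key 0, key 1, hG 0, hG 1]
  linear_combination (u x 0) * hm0 + (u x 1) * hm1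
    + (pd (fun y => b y 1) 0 x - pd (fun y => b y 0) 1 x) * hc
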